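/- Let W be any subspace of V with W ⊆ W^(j) and W ⊄ W^(j-1), where {W^(j)} is the normalized-entropy subspace chain. Then for every subspace W' ⊇ W, max over U1 ⊊ W' of H_N(W'|U1) is at least H_N(W^(j)|W^(j-1)). Consequently the minimum over superspaces W' ⊇ W of the worst-case normalized conditional entropy equals H_N(W^(j)|W^(j-1)), attained at W' = W^(j). -/

import Mathlib

open scoped BigOperators

open Classical in
/-- Base-2 Shannon entropy of the random variable `f` on the finite probability
space `(Ω, p)`. -/
noncomputable def mapEnt {Ω β : Type*} [Fintype Ω] [Fintype β]
    (p : Ω → ℝ) (f : Ω → β) : ℝ :=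
  ∑ b : β, -((∑ ω ∈ Finset.univ.filter (fun ω => f ω = b), p ω) *
      Real.logb 2 (∑ ω ∈ Finset.univ.filter (fun ω => f ω = b), p ω))

open Classical in
/-- Entropy of a subspace `U` of the space of `F`-valued random variables on `Ω`:
the joint entropy of the collection of all random variables in `U` (equivalently,
of any generating set). -/
noncomputable def subEnt {F Ω : Type*} [Field F] [Fintype F] [Fintype Ω]
    (p : Ω → ℝ) (U : Submodule F (Ω → F)) : ℝ :=
  mapEnt p (fun ω => (fun u : U => (u : Ω → F) ω))

/-- Normalized conditional entropy `H_N(U|W) = (H(W+U) - H(W)) / (dim(W+U) - dim W)`. -/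
noncomputable def condNE {F Ω : Type*} [Field F] [Fintype F] [Fintype Ω]
    (p : Ω → ℝ) (U W : Submodule F (Ω → F)) : ℝ :=
  (subEnt p (W ⊔ U) - subEnt p W) /
    ((Module.finrank F ↥(W ⊔ U) : ℝ) - (Module.finrank F ↥W : ℝ))

/-- `IsNEChain p V r W` says that `⊥ = W 0 ⊊ W 1 ⊊ ... ⊊ W r = V` is a strictly
increasing chain of subspaces of `V` such that for each `j`: (1) among all subspaces
of `V` strictly containing `W j`, `W (j+1)` has the least normalized conditional
entropy conditioned on `W j`, and (2) any subspace of `V` strictly containing `W j`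
achieving this minimum is contained in `W (j+1)`. -/
def IsNEChain {F Ω : Type*} [Field F] [Fintype F] [Fintype Ω]
    (p : Ω → ℝ) (V : Submodule F (Ω → F)) (r : ℕ) (W : ℕ → Submodule F (Ω → F)) : Prop :=
  W 0 = ⊥ ∧ W r = V ∧ (∀ j, j < r → W j < W (j + 1)) ∧ (∀ j, j ≤ r → W j ≤ V) ∧
  ∀ j, j < r →
    (∀ U : Submodule F (Ω → F), U ≤ V → W j < U →
        condNE p (W (j + 1)) (W j) ≤ condNE p U (W j)) ∧
    (∀ U : Submodule F (Ω → F), U ≤ V → W j < U →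
        condNE p U (W j) = condNE p (W (j + 1)) (W j) → U ≤ W (j + 1))

set_option linter.unusedSectionVars false
set_option linter.unusedVariables false
set_option maxHeartbeats 1000000



section MapEnt
open Classical
variable {Ω α β γ : Type*} [Fintype Ω] [Fintype α] [Fintype β] [Fintype γ]

open Classical in
noncomputable def fibW (p : Ω → ℝ) (f : Ω → α) (a : α) : ℝ :=
  ∑ ω ∈ Finset.univ.filter (fun ω => f ω = a), p ω

open Classical in
lemma fibW_nonneg (p : Ω → ℝ) (hp : ∀ ω, 0 ≤ p ω) (f : Ω → α) (a : α) :
    0 ≤ fibW p f a :=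
  Finset.sum_nonneg fun ω _ => hp ω

open Classical in
lemma sum_fibW (p : Ω → ℝ) (f : Ω → α) : ∑ a, fibW p f a = ∑ ω, p ω :=
  Finset.sum_fiberwise _ _ _

open Classical in
lemma mapEnt_eq_sum (p : Ω → ℝ) (f : Ω → α) :
    mapEnt p f = ∑ ω, -(p ω * Real.logb 2 (fibW p f (f ω))) := by
  rw [← Finset.sum_fiberwise Finset.univ f
      (fun ω => -(p ω * Real.logb 2 (fibW p f (f ω))))]
  unfold mapEnt
  refine Finset.sum_congr rfl fun b _ => ?_
  rw [show (∑ ω ∈ Finset.univ.filter (fun ω => f ω = b),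
        -(p ω * Real.logb 2 (fibW p f (f ω))))
      = ∑ ω ∈ Finset.univ.filter (fun ω => f ω = b),
        -(p ω * Real.logb 2 (fibW p f b)) from
    Finset.sum_congr rfl fun ω hω => by rw [(Finset.mem_filter.mp hω).2]]
  rw [Finset.sum_neg_distrib, ← Finset.sum_mul]
  rfl

open Classical in
lemma mapEnt_congr (p : Ω → ℝ) (f : Ω → α) (g : Ω → β)
    (hfg : ∀ ω ω', f ω = f ω' ↔ g ω = g ω') :
    mapEnt p f = mapEnt p g := by
  rw [mapEnt_eq_sum, mapEnt_eq_sum]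
  refine Finset.sum_congr rfl fun ω _ => ?_
  have : fibW p f (f ω) = fibW p g (g ω) := by
    unfold fibW
    refine Finset.sum_congr ?_ fun _ _ => rfl
    apply Finset.filter_congr
    intro ω' _
    simpa using hfg ω' ω
  rw [this]


open Classical in
lemma fibW_le (p : Ω → ℝ) (hp : ∀ ω, 0 ≤ p ω) (f : Ω → α) (g : Ω → β)
    (a : α) (b : β) (hab : ∀ ω, g ω = b → f ω = a) : fibW p g b ≤ fibW p f a := by
  apply Finset.sum_le_sum_of_subset_of_nonneg
  · intro ω hω
    simp only [Finset.mem_filter, Finset.mem_univ, true_and] at *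
    exact hab ω hω
  · exact fun ω _ _ => hp ω

open Classical in
lemma marg_eq (p : Ω → ℝ) (f : Ω → α) (h : Ω → γ) (φ : α → γ)
    (hφ : ∀ ω, h ω = φ (f ω)) (z : γ) :
    ∑ a ∈ Finset.univ.filter (fun a => φ a = z), fibW p f a = fibW p h z := by
  unfold fibW
  rw [Finset.sum_fiberwise_eq_sum_filter Finset.univ
      (Finset.univ.filter (fun a => φ a = z)) f p]
  refine Finset.sum_congr ?_ fun _ _ => rfl
  apply Finset.filter_congr
  intro ω _
  simp [hφ ω]

lemma gibbs_core {ι : Type*} [Fintype ι] (t q : ι → ℝ) (ht : ∀ i, 0 ≤ t i)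
    (hq : ∀ i, 0 ≤ q i) (hpos : ∀ i, t i ≠ 0 → 0 < q i)
    (hqs : ∑ i, q i ≤ ∑ i, t i) :
    ∑ i, t i * (Real.log (q i) - Real.log (t i)) ≤ 0 := by
  have per : ∀ i, t i * (Real.log (q i) - Real.log (t i)) ≤ q i - t i := by
    intro i
    rcases eq_or_lt_of_le (ht i) with h0 | h0
    · rw [← h0]
      simpa using hq i
    · have hti : t i ≠ 0 := ne_of_gt h0
      have hqi : 0 < q i := hpos i hti
      have hlog : Real.log (q i) - Real.log (t i) = Real.log (q i / t i) :=
        (Real.log_div (ne_of_gt hqi) hti).symm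
      rw [hlog]
      have h2 := Real.log_le_sub_one_of_pos (div_pos hqi h0)
      calc t i * Real.log (q i / t i) ≤ t i * (q i / t i - 1) :=
            mul_le_mul_of_nonneg_left h2 (le_of_lt h0)
        _ = q i - t i := by field_simp
  calc ∑ i, t i * (Real.log (q i) - Real.log (t i)) ≤ ∑ i, (q i - t i) :=
        Finset.sum_le_sum fun i _ => per i
    _ = (∑ i, q i) - ∑ i, t i := Finset.sum_sub_distrib _ _
    _ ≤ 0 := by linarith

open Classical in
lemma fibW_witness (p : Ω → ℝ) (f : Ω → α) (a : α) (h : fibW p f a ≠ 0) :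
    ∃ ω, f ω = a := by
  obtain ⟨ω, hω⟩ := Finset.nonempty_of_sum_ne_zero h
  exact ⟨ω, (Finset.mem_filter.mp hω).2⟩

open Classical in
lemma mapEnt_submod (p : Ω → ℝ) (hp : ∀ ω, 0 ≤ p ω) (hp1 : ∑ ω, p ω = 1)
    (f : Ω → α) (g : Ω → β) (h : Ω → γ) (φ : α → γ) (ψ : β → γ)
    (hφ : ∀ ω, h ω = φ (f ω)) (hψ : ∀ ω, h ω = ψ (g ω)) :
    mapEnt p (fun ω => (f ω, g ω)) + mapEnt p h ≤ mapEnt p f + mapEnt p g := by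
  have hlog2 : (0:ℝ) < Real.log 2 := Real.log_pos one_lt_two
  set J : Ω → α × β := fun ω => (f ω, g ω) with hJ
  set t : α × β → ℝ := fibW p J with ht
  set PA : α → ℝ := fibW p f with hPA
  set PB : β → ℝ := fibW p g with hPB
  set PZ : γ → ℝ := fibW p h with hPZ
  have htn : ∀ x, 0 ≤ t x := fibW_nonneg p hp J
  have hPAn : ∀ a, 0 ≤ PA a := fibW_nonneg p hp f
  have hPBn : ∀ b, 0 ≤ PB b := fibW_nonneg p hp g
  have hPZn : ∀ z, 0 ≤ PZ z := fibW_nonneg p hp h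
  have htPA : ∀ x : α × β, t x ≤ PA x.1 := fun x =>
    fibW_le p hp f J x.1 x (fun ω hω => congrArg Prod.fst hω)
  have htPB : ∀ x : α × β, t x ≤ PB x.2 := fun x =>
    fibW_le p hp g J x.2 x (fun ω hω => congrArg Prod.snd hω)
  have hPAZ : ∀ a, PA a ≤ PZ (φ a) := fun a =>
    fibW_le p hp h f (φ a) a (fun ω hω => by rw [hφ ω, hω])
  have hzz : ∀ x : α × β, t x ≠ 0 → φ x.1 = ψ x.2 := by
    intro x hx
    obtain ⟨ω, hJω⟩ := fibW_witness p J x hx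
    have h1 : f ω = x.1 := congrArg Prod.fst hJω
    have h2 : g ω = x.2 := congrArg Prod.snd hJω
    rw [← h1, ← h2, ← hφ ω, ← hψ ω]
  have hts : ∑ x, t x = 1 := by rw [ht, sum_fibW, hp1]
  have hPZs : ∑ z, PZ z = 1 := by rw [hPZ, sum_fibW, hp1]
  -- the "q" of the Gibbs argument
  set Q : α × β → ℝ := fun x =>
    if t x = 0 then 0 else PA x.1 * PB x.2 / PZ (φ x.1) with hQ
  have hQn : ∀ x, 0 ≤ Q x := by
    intro x
    rw [hQ]
    dsimp only
    split
    · exact le_refl 0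
    · exact div_nonneg (mul_nonneg (hPAn _) (hPBn _)) (hPZn _)
  have hQpos : ∀ x, t x ≠ 0 → 0 < Q x := by
    intro x hx
    have h1 : 0 < t x := (htn x).lt_of_ne (Ne.symm hx)
    have h2 : 0 < PA x.1 := lt_of_lt_of_le h1 (htPA x)
    have h3 : 0 < PB x.2 := lt_of_lt_of_le h1 (htPB x)
    have h4 : 0 < PZ (φ x.1) := lt_of_lt_of_le h2 (hPAZ x.1)
    rw [hQ]
    dsimp only
    rw [if_neg hx]
    positivity
  -- ∑ Q ≤ 1
  have hQs : ∑ x, Q x ≤ 1 := by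
    set S : Finset (α × β) :=
      Finset.univ.filter (fun x : α × β => φ x.1 = ψ x.2 ∧ PZ (φ x.1) ≠ 0) with hS
    have step1 : ∑ x, Q x ≤ ∑ x ∈ S, PA x.1 * PB x.2 / PZ (φ x.1) := by
      rw [show ∑ x, Q x
          = ∑ x ∈ Finset.univ.filter (fun x : α × β => ¬ t x = 0),
              PA x.1 * PB x.2 / PZ (φ x.1) from by
        rw [Finset.sum_filter]
        refine Finset.sum_congr rfl fun x _ => ?_
        rw [hQ]
        dsimp only
        by_cases hx : t x = 0 <;> simp [hx]]
      apply Finset.sum_le_sum_of_subset_of_nonneg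
      · intro x hx
        have hx' : ¬ t x = 0 := (Finset.mem_filter.mp hx).2
        have h1 : 0 < t x := (htn x).lt_of_ne (Ne.symm hx')
        have h2 : 0 < PZ (φ x.1) :=
          lt_of_lt_of_le (lt_of_lt_of_le h1 (htPA x)) (hPAZ x.1)
        rw [hS]
        simp only [Finset.mem_filter, Finset.mem_univ, true_and]
        exact ⟨hzz x hx', ne_of_gt h2⟩
      · intro x _ _
        exact div_nonneg (mul_nonneg (hPAn _) (hPBn _)) (hPZn _)
    have step2 : ∑ x ∈ S, PA x.1 * PB x.2 / PZ (φ x.1) ≤ ∑ z, PZ z := by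
      rw [← Finset.sum_fiberwise_of_maps_to
            (g := fun x : α × β => φ x.1) (t := (Finset.univ : Finset γ))
            (fun x _ => Finset.mem_univ _)
            (fun x : α × β => PA x.1 * PB x.2 / PZ (φ x.1))]
      apply Finset.sum_le_sum
      intro z _
      by_cases hz0 : PZ z = 0
      · have hempty : S.filter (fun x : α × β => φ x.1 = z) = ∅ := by
          apply Finset.eq_empty_of_forall_notMem
          intro x hx
          obtain ⟨hxS, hxz⟩ := Finset.mem_filter.mp hx
          obtain ⟨_, hne⟩ := (Finset.mem_filter.mp hxS).2
          rw [hxz] at hne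
          exact hne hz0
        rw [hempty]
        simp [hPZn z]
      · have hSz : S.filter (fun x : α × β => φ x.1 = z)
            = (Finset.univ.filter (fun a => φ a = z)) ×ˢ
              (Finset.univ.filter (fun b => ψ b = z)) := by
          ext x
          simp only [hS, Finset.mem_filter, Finset.mem_univ, true_and,
            Finset.mem_product]
          constructor
          · rintro ⟨⟨he, _⟩, hz⟩
            exact ⟨hz, by rw [← he, hz]⟩
          · rintro ⟨h1, h2⟩
            exact ⟨⟨by rw [h1, h2], by rw [h1]; exact hz0⟩, h1⟩
        rw [hSz, Finset.sum_product]
        have : ∀ a ∈ Finset.univ.filter (fun a => φ a = z),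
            (∑ b ∈ Finset.univ.filter (fun b => ψ b = z),
              PA a * PB b / PZ (φ a))
            = PA a * (∑ b ∈ Finset.univ.filter (fun b => ψ b = z), PB b) / PZ z := by
          intro a ha
          have hz' : φ a = z := (Finset.mem_filter.mp ha).2
          rw [hz', Finset.mul_sum, Finset.sum_div]
        rw [Finset.sum_congr rfl this]
        rw [marg_eq p g h ψ hψ z, ← Finset.sum_div, ← Finset.sum_mul,
          marg_eq p f h φ hφ z]
        rw [mul_div_assoc, div_self hz0, mul_one]
    calc ∑ x, Q x ≤ ∑ x ∈ S, PA x.1 * PB x.2 / PZ (φ x.1) := step1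
      _ ≤ ∑ z, PZ z := step2
      _ = 1 := hPZs
  -- the Gibbs bound
  have hgibbs : ∑ x, t x * (Real.log (Q x) - Real.log (t x)) ≤ 0 :=
    gibbs_core t Q htn hQn hQpos (by rw [hts]; exact hQs)
  -- rewrite the per-x log expression
  have hLQ : ∀ x : α × β, t x * (Real.log (Q x) - Real.log (t x))
      = t x * (Real.log (PA x.1) + Real.log (PB x.2)
          - Real.log (PZ (φ x.1)) - Real.log (t x)) := by
    intro x
    by_cases hx : t x = 0
    · rw [hx]; ring
    · have h1 : 0 < t x := (htn x).lt_of_ne (Ne.symm hx)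
      have h2 : 0 < PA x.1 := lt_of_lt_of_le h1 (htPA x)
      have h3 : 0 < PB x.2 := lt_of_lt_of_le h1 (htPB x)
      have h4 : 0 < PZ (φ x.1) := lt_of_lt_of_le h2 (hPAZ x.1)
      have hQx : Q x = PA x.1 * PB x.2 / PZ (φ x.1) := by
        rw [hQ]; exact if_neg hx
      have : Real.log (Q x)
          = Real.log (PA x.1) + Real.log (PB x.2) - Real.log (PZ (φ x.1)) := by
        rw [hQx, Real.log_div (by positivity) (ne_of_gt h4),
          Real.log_mul (ne_of_gt h2) (ne_of_gt h3)]
      rw [this]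
  set c : α × β → ℝ := fun x => Real.log (PA x.1) + Real.log (PB x.2)
      - Real.log (PZ (φ x.1)) - Real.log (t x) with hc
  have hsum_t : ∑ x, t x * c x ≤ 0 := by
    calc ∑ x, t x * c x = ∑ x, t x * (Real.log (Q x) - Real.log (t x)) := by
          refine Finset.sum_congr rfl fun x _ => ?_
          rw [hLQ x, hc]
      _ ≤ 0 := hgibbs
  have heq : ∑ ω, p ω * c (J ω) = ∑ x, t x * c x := by
    rw [← Finset.sum_fiberwise Finset.univ J (fun ω => p ω * c (J ω))]
    refine Finset.sum_congr rfl fun x _ => ?_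
    rw [show (∑ ω ∈ Finset.univ.filter (fun ω => J ω = x), p ω * c (J ω))
        = ∑ ω ∈ Finset.univ.filter (fun ω => J ω = x), p ω * c x from
      Finset.sum_congr rfl fun ω hω => by rw [(Finset.mem_filter.mp hω).2]]
    rw [← Finset.sum_mul]
    congr 1
    rw [ht]
    unfold fibW
    congr 1
    ext ω
    simp
  rw [mapEnt_eq_sum p J, mapEnt_eq_sum p h, mapEnt_eq_sum p f, mapEnt_eq_sum p g]
  have hexp : ∀ ω, p ω * c (J ω) =
      -(p ω * Real.logb 2 (fibW p J (J ω))) * Real.log 2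
        + -(p ω * Real.logb 2 (fibW p h (h ω))) * Real.log 2
        - -(p ω * Real.logb 2 (fibW p f (f ω))) * Real.log 2
        - -(p ω * Real.logb 2 (fibW p g (g ω))) * Real.log 2 := by
    intro ω
    rw [hc]
    dsimp only
    rw [hφ ω]
    simp only [← Real.log_div_log]
    field_simp
    ring
  have hmul : ∑ ω, p ω * c (J ω) =
      ((∑ ω, -(p ω * Real.logb 2 (fibW p J (J ω))))
        + (∑ ω, -(p ω * Real.logb 2 (fibW p h (h ω))))
        - (∑ ω, -(p ω * Real.logb 2 (fibW p f (f ω))))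
        - (∑ ω, -(p ω * Real.logb 2 (fibW p g (g ω))))) * Real.log 2 := by
    rw [sub_mul, sub_mul, add_mul, Finset.sum_mul, Finset.sum_mul, Finset.sum_mul,
      Finset.sum_mul, ← Finset.sum_add_distrib, ← Finset.sum_sub_distrib,
      ← Finset.sum_sub_distrib]
    exact Finset.sum_congr rfl fun ω _ => hexp ω
  have hS : ((∑ ω, -(p ω * Real.logb 2 (fibW p J (J ω))))
        + (∑ ω, -(p ω * Real.logb 2 (fibW p h (h ω))))
        - (∑ ω, -(p ω * Real.logb 2 (fibW p f (f ω))))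
        - (∑ ω, -(p ω * Real.logb 2 (fibW p g (g ω))))) * Real.log 2 ≤ 0 := by
    rw [← hmul, heq]
    exact hsum_t
  nlinarith [hS, hlog2]

end MapEnt
section SubEntLayer
open Classical
variable {F Ω : Type*} [Field F] [Fintype F] [Fintype Ω]

open Classical in
lemma subEnt_sup_eq_joint (p : Ω → ℝ) (A B : Submodule F (Ω → F)) :
    subEnt p (A ⊔ B) = mapEnt p (fun ω =>
      ((fun a : A => (a : Ω → F) ω), (fun b : B => (b : Ω → F) ω))) := by
  apply mapEnt_congr
  intro ω ω'
  constructor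
  · intro hsup
    refine Prod.ext (funext fun a => ?_) (funext fun b => ?_)
    · exact congrFun hsup ⟨(a : Ω → F), Submodule.mem_sup_left a.2⟩
    · exact congrFun hsup ⟨(b : Ω → F), Submodule.mem_sup_right b.2⟩
  · intro hj
    have h1 : (fun a : A => (a : Ω → F) ω) = (fun a : A => (a : Ω → F) ω') :=
      congrArg Prod.fst hj
    have h2 : (fun b : B => (b : Ω → F) ω) = (fun b : B => (b : Ω → F) ω') :=
      congrArg Prod.snd hj
    funext u
    obtain ⟨a, ha, b, hb, hab⟩ := Submodule.mem_sup.mp u.2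
    have : (u : Ω → F) = a + b := hab.symm
    rw [this]
    have ea : a ω = a ω' := congrFun h1 ⟨a, ha⟩
    have eb : b ω = b ω' := congrFun h2 ⟨b, hb⟩
    simp [ea, eb]

open Classical in
lemma subEnt_submod (p : Ω → ℝ) (hp : ∀ ω, 0 ≤ p ω) (hp1 : ∑ ω, p ω = 1)
    (A B : Submodule F (Ω → F)) :
    subEnt p (A ⊔ B) + subEnt p (A ⊓ B) ≤ subEnt p A + subEnt p B := by
  rw [subEnt_sup_eq_joint p A B]
  exact mapEnt_submod p hp hp1
    (fun ω => (fun a : A => (a : Ω → F) ω))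
    (fun ω => (fun b : B => (b : Ω → F) ω))
    (fun ω => (fun u : ↥(A ⊓ B) => (u : Ω → F) ω))
    (fun e => fun u : ↥(A ⊓ B) => e ⟨(u : Ω → F), (Submodule.mem_inf.mp u.2).1⟩)
    (fun e => fun u : ↥(A ⊓ B) => e ⟨(u : Ω → F), (Submodule.mem_inf.mp u.2).2⟩)
    (fun ω => rfl) (fun ω => rfl)

end SubEntLayer
section Chain
open Classical
variable {F Ω : Type*} [Field F] [Fintype F] [Fintype Ω]

lemma condNE_eq_of_le (p : Ω → ℝ) (U W : Submodule F (Ω → F)) (h : W ≤ U) :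
    condNE p U W = (subEnt p U - subEnt p W) /
      ((Module.finrank F ↥U : ℝ) - (Module.finrank F ↥W : ℝ)) := by
  rw [condNE, sup_eq_right.mpr h]

lemma finrank_lt_real (A B : Submodule F (Ω → F)) (h : A < B) :
    (Module.finrank F ↥A : ℝ) < (Module.finrank F ↥B : ℝ) := by
  exact_mod_cast Submodule.finrank_lt_finrank_of_lt h

lemma finrank_le_real (A B : Submodule F (Ω → F)) (h : A ≤ B) :
    (Module.finrank F ↥A : ℝ) ≤ (Module.finrank F ↥B : ℝ) := by
  exact_mod_cast Submodule.finrank_mono h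

lemma finrank_modular_real (A B : Submodule F (Ω → F)) :
    (Module.finrank F ↥(A ⊔ B) : ℝ) + (Module.finrank F ↥(A ⊓ B) : ℝ)
      = (Module.finrank F ↥A : ℝ) + (Module.finrank F ↥B : ℝ) := by
  exact_mod_cast Submodule.finrank_sup_add_finrank_inf_eq A B

lemma condNE_mul (p : Ω → ℝ) (U W : Submodule F (Ω → F)) (h : W < U) :
    subEnt p U - subEnt p W
      = condNE p U W * ((Module.finrank F ↥U : ℝ) - (Module.finrank F ↥W : ℝ)) := by
  rw [condNE_eq_of_le p U W h.le, div_mul_cancel₀]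
  exact sub_ne_zero.mpr (ne_of_gt (finrank_lt_real W U h))

variable (p : Ω → ℝ) (V : Submodule F (Ω → F)) (r : ℕ) (Wc : ℕ → Submodule F (Ω → F))

lemma chain_le (hchain : IsNEChain p V r Wc) :
    ∀ n i, i + n ≤ r → Wc i ≤ Wc (i + n) := by
  intro n
  induction n with
  | zero => intro i _; exact le_refl _
  | succ n ih =>
    intro i hi
    have h1 : Wc i ≤ Wc (i + n) := ih i (by omega)
    have h2 : Wc (i + n) < Wc (i + n + 1) := hchain.2.2.1 (i + n) (by omega)
    exact h1.trans h2.le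

lemma chain_le' (hchain : IsNEChain p V r Wc) (i k : ℕ) (hik : i ≤ k) (hk : k ≤ r) :
    Wc i ≤ Wc k := by
  have := chain_le p V r Wc hchain (k - i) i (by omega)
  rwa [show i + (k - i) = k by omega] at this

lemma chain_step_lower (hchain : IsNEChain p V r Wc) (i : ℕ) (hi : i < r)
    (Z : Submodule F (Ω → F)) (hZV : Z ≤ V) (hZ : Wc i < Z) :
    condNE p (Wc (i + 1)) (Wc i)
        * ((Module.finrank F ↥Z : ℝ) - (Module.finrank F ↥(Wc i) : ℝ))
      ≤ subEnt p Z - subEnt p (Wc i) := by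
  have hmin := (hchain.2.2.2.2 i hi).1 Z hZV hZ
  rw [condNE_eq_of_le p Z (Wc i) hZ.le] at hmin
  have hd : (0:ℝ) < (Module.finrank F ↥Z : ℝ) - (Module.finrank F ↥(Wc i) : ℝ) := by
    linarith [finrank_lt_real (Wc i) Z hZ]
  calc condNE p (Wc (i + 1)) (Wc i) * ((Module.finrank F ↥Z : ℝ) - (Module.finrank F ↥(Wc i) : ℝ))
      ≤ ((subEnt p Z - subEnt p (Wc i)) / ((Module.finrank F ↥Z : ℝ) - (Module.finrank F ↥(Wc i) : ℝ)))
          * ((Module.finrank F ↥Z : ℝ) - (Module.finrank F ↥(Wc i) : ℝ)) :=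
        mul_le_mul_of_nonneg_right hmin hd.le
    _ = subEnt p Z - subEnt p (Wc i) := div_mul_cancel₀ _ (ne_of_gt hd)

lemma chain_step_bound (hchain : IsNEChain p V r Wc) (i : ℕ) (hi : i < r)
    (Z : Submodule F (Ω → F)) (h1 : Wc i ≤ Z) (h2 : Z ≤ Wc (i + 1)) :
    subEnt p (Wc (i + 1)) - subEnt p Z
      ≤ condNE p (Wc (i + 1)) (Wc i)
          * ((Module.finrank F ↥(Wc (i + 1)) : ℝ) - (Module.finrank F ↥Z : ℝ)) := by
  have hexact := condNE_mul p (Wc (i + 1)) (Wc i) (hchain.2.2.1 i hi)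
  rcases h1.lt_or_eq with hlt | heq
  · have hZV : Z ≤ V := h2.trans (hchain.2.2.2.1 (i + 1) hi)
    have hlow := chain_step_lower p V r Wc hchain i hi Z hZV hlt
    have hring : condNE p (Wc (i + 1)) (Wc i)
          * ((Module.finrank F ↥(Wc (i+1)) : ℝ) - (Module.finrank F ↥(Wc i) : ℝ))
        - condNE p (Wc (i + 1)) (Wc i)
          * ((Module.finrank F ↥Z : ℝ) - (Module.finrank F ↥(Wc i) : ℝ))
        = condNE p (Wc (i + 1)) (Wc i)
          * ((Module.finrank F ↥(Wc (i+1)) : ℝ) - (Module.finrank F ↥Z : ℝ)) := by ring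
    linarith
  · rw [← heq]
    linarith

lemma chain_slope_mono_succ (hchain : IsNEChain p V r Wc) (i : ℕ) (hi : i + 1 < r) :
    condNE p (Wc (i + 1)) (Wc i) ≤ condNE p (Wc (i + 2)) (Wc (i + 1)) := by
  have h12 : Wc (i + 1) < Wc (i + 2) := hchain.2.2.1 (i + 1) hi
  have h02 : Wc i < Wc (i + 2) := (hchain.2.2.1 i (by omega)).trans h12
  have hV2 : Wc (i + 2) ≤ V := hchain.2.2.2.1 (i + 2) (by omega)
  have hlow := chain_step_lower p V r Wc hchain i (by omega) (Wc (i + 2)) hV2 h02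
  have hexact := condNE_mul p (Wc (i + 1)) (Wc i) (hchain.2.2.1 i (by omega))
  have hd : (0:ℝ) < (Module.finrank F ↥(Wc (i+2)) : ℝ) - (Module.finrank F ↥(Wc (i+1)) : ℝ) := by
    linarith [finrank_lt_real (Wc (i+1)) (Wc (i+2)) h12]
  rw [condNE_eq_of_le p (Wc (i + 2)) (Wc (i + 1)) h12.le]
  rw [le_div_iff₀ hd]
  have hring : condNE p (Wc (i + 1)) (Wc i)
        * ((Module.finrank F ↥(Wc (i+2)) : ℝ) - (Module.finrank F ↥(Wc i) : ℝ))
      - condNE p (Wc (i + 1)) (Wc i)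
        * ((Module.finrank F ↥(Wc (i+1)) : ℝ) - (Module.finrank F ↥(Wc i) : ℝ))
      = condNE p (Wc (i + 1)) (Wc i)
        * ((Module.finrank F ↥(Wc (i+2)) : ℝ) - (Module.finrank F ↥(Wc (i+1)) : ℝ)) := by ring
  linarith

lemma chain_slope_mono (hchain : IsNEChain p V r Wc) (i k : ℕ) (hik : i ≤ k) (hk : k < r) :
    condNE p (Wc (i + 1)) (Wc i) ≤ condNE p (Wc (k + 1)) (Wc k) := by
  induction k with
  | zero => rw [Nat.le_zero.mp hik]
  | succ k ih =>
    rcases Nat.lt_or_ge i (k + 1) with hlt | hge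
    · have h1 := ih (by omega) (by omega)
      have h2 := chain_slope_mono_succ p V r Wc hchain k hk
      exact h1.trans h2
    · rw [show i = k + 1 by omega]
end Chain
section Final
open Classical
variable {F Ω : Type*} [Field F] [Fintype F] [Fintype Ω]
variable (p : Ω → ℝ) (V : Submodule F (Ω → F)) (r : ℕ) (Wc : ℕ → Submodule F (Ω → F))

lemma chain_teles (hp : ∀ ω, 0 ≤ p ω) (hp1 : ∑ ω, p ω = 1)
    (hchain : IsNEChain p V r Wc) (j : ℕ) (hj1 : 1 ≤ j) (hjr : j ≤ r)
    (U1 : Submodule F (Ω → F)) :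
    ∀ i, i ≤ j → subEnt p (U1 ⊔ Wc i) - subEnt p U1
      ≤ condNE p (Wc (j - 1 + 1)) (Wc (j - 1))
          * ((Module.finrank F ↥(U1 ⊔ Wc i) : ℝ) - (Module.finrank F ↥U1 : ℝ)) := by
  intro i
  induction i with
  | zero =>
    intro _
    rw [hchain.1, sup_bot_eq]
    simp
  | succ i ih =>
    intro hi
    have hIH := ih (by omega)
    have hir : i < r := by omega
    set s := condNE p (Wc (j - 1 + 1)) (Wc (j - 1)) with hs
    set X := U1 ⊔ Wc i with hX
    set Z := X ⊓ Wc (i + 1) with hZ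
    have hsteple : Wc i ≤ Wc (i + 1) := (hchain.2.2.1 i hir).le
    have hXA : U1 ⊔ Wc (i + 1) = X ⊔ Wc (i + 1) := by
      rw [hX, sup_assoc, sup_eq_right.mpr hsteple]
    have hsub := subEnt_submod p hp hp1 X (Wc (i + 1))
    have hZ1 : Wc i ≤ Z := le_inf (le_sup_right.trans (le_refl X)) hsteple
    have hZ2 : Z ≤ Wc (i + 1) := inf_le_right
    have hstep := chain_step_bound p V r Wc hchain i hir Z hZ1 hZ2
    have hsm : condNE p (Wc (i + 1)) (Wc i) ≤ s :=
      chain_slope_mono p V r Wc hchain i (j - 1) (by omega) (by omega)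
    have hfac : (0:ℝ) ≤ (Module.finrank F ↥(Wc (i+1)) : ℝ) - (Module.finrank F ↥Z : ℝ) := by
      linarith [finrank_le_real Z (Wc (i + 1)) hZ2]
    have hstep' : subEnt p (Wc (i + 1)) - subEnt p Z
        ≤ s * ((Module.finrank F ↥(Wc (i+1)) : ℝ) - (Module.finrank F ↥Z : ℝ)) :=
      hstep.trans (mul_le_mul_of_nonneg_right hsm hfac)
    have hmod := finrank_modular_real X (Wc (i + 1))
    rw [hXA]
    have hdd : (Module.finrank F ↥(X ⊔ Wc (i+1)) : ℝ) - (Module.finrank F ↥U1 : ℝ)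
        = ((Module.finrank F ↥(Wc (i+1)) : ℝ) - (Module.finrank F ↥Z : ℝ))
          + ((Module.finrank F ↥X : ℝ) - (Module.finrank F ↥U1 : ℝ)) := by
      rw [← hZ] at hmod; linarith
    rw [hdd, mul_add]
    linarith

theorem aux_stmt_10 (hp : ∀ ω, 0 ≤ p ω) (hpsum : ∑ ω, p ω = 1)
    (hchain : IsNEChain p V r Wc)
    (j : ℕ) (hj1 : 1 ≤ j) (hjr : j ≤ r)
    (W : Submodule F (Ω → F)) (hWj : W ≤ Wc j) (hWj1 : ¬ W ≤ Wc (j - 1)) :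
    (∀ W' : Submodule F (Ω → F), W ≤ W' → W' ≤ V →
        ∃ U1 : Submodule F (Ω → F), U1 < W' ∧
          condNE p (Wc j) (Wc (j - 1)) ≤ condNE p W' U1) ∧
      (∀ U1 : Submodule F (Ω → F), U1 < Wc j →
        condNE p (Wc j) U1 ≤ condNE p (Wc j) (Wc (j - 1))) := by
  have hj' : j - 1 + 1 = j := Nat.succ_pred_eq_of_pos hj1
  have hseq : condNE p (Wc j) (Wc (j - 1)) = condNE p (Wc (j - 1 + 1)) (Wc (j - 1)) := by
    rw [hj']
  constructor
  · intro W' hWW' hW'V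
    refine ⟨W' ⊓ Wc (j - 1), ?_, ?_⟩
    · refine lt_of_le_of_ne inf_le_left fun heq => ?_
      exact hWj1 (hWW'.trans (heq ▸ inf_le_right))
    · have hltW' : W' ⊓ Wc (j - 1) < W' :=
        lt_of_le_of_ne inf_le_left fun heq => hWj1 (hWW'.trans (heq ▸ inf_le_right))
      have hXgt : Wc (j - 1) < W' ⊔ Wc (j - 1) := by
        refine lt_of_le_of_ne le_sup_right fun heq => ?_
        exact hWj1 (hWW'.trans (le_sup_left.trans heq.symm.le))
      have hXV : W' ⊔ Wc (j - 1) ≤ V :=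
        sup_le hW'V (hchain.2.2.2.1 (j - 1) (by omega))
      have hlow := chain_step_lower p V r Wc hchain (j - 1) (by omega)
        (W' ⊔ Wc (j - 1)) hXV hXgt
      have hsub := subEnt_submod p hp hpsum W' (Wc (j - 1))
      have hmod := finrank_modular_real W' (Wc (j - 1))
      have hΔ : (0:ℝ) < (Module.finrank F ↥W' : ℝ)
          - (Module.finrank F ↥(W' ⊓ Wc (j - 1)) : ℝ) := by
        linarith only [finrank_lt_real (W' ⊓ Wc (j - 1)) W' hltW']
      rw [condNE_eq_of_le p W' (W' ⊓ Wc (j - 1)) inf_le_left, le_div_iff₀ hΔ]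
      have hΔeq : (Module.finrank F ↥(W' ⊔ Wc (j-1)) : ℝ)
            - (Module.finrank F ↥(Wc (j - 1)) : ℝ)
          = (Module.finrank F ↥W' : ℝ) - (Module.finrank F ↥(W' ⊓ Wc (j - 1)) : ℝ) := by
        linarith only [hmod]
      rw [hj'] at hlow
      rw [hΔeq] at hlow
      linarith only [hlow, hsub, hseq]
  · intro U1 hU1lt
    have hT := chain_teles p V r Wc hp hpsum hchain j hj1 hjr U1 j (le_refl j)
    rw [sup_eq_right.mpr hU1lt.le] at hT
    have hΔ : (0:ℝ) < (Module.finrank F ↥(Wc j) : ℝ) - (Module.finrank F ↥U1 : ℝ) := by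
      linarith only [finrank_lt_real U1 (Wc j) hU1lt]
    rw [hj'] at hT
    rw [condNE_eq_of_le p (Wc j) U1 hU1lt.le, div_le_iff₀ hΔ]
    linarith only [hT]

end Final

/-- Let `W ⊆ W^(j)` with `W ⊄ W^(j-1)`. Then every superspace `W' ⊇ W` (within `V`) has
worst-case normalized conditional entropy at least `H_N(W^(j)|W^(j-1))`, and this value
is attained at `W' = W^(j)`: the minimum over superspaces of the worst-case normalized
conditional entropy equals `H_N(W^(j)|W^(j-1))`. -/
theorem stmt_10 {F Ω : Type*} [Field F] [Fintype F] [Fintype Ω]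
    (p : Ω → ℝ) (hp : ∀ ω, 0 ≤ p ω) (hpsum : ∑ ω, p ω = 1)
    {m : ℕ} (X : Fin m → (Ω → F)) (hX : LinearIndependent F X)
    (V : Submodule F (Ω → F)) (hV : V = Submodule.span F (Set.range X))
    (r : ℕ) (Wc : ℕ → Submodule F (Ω → F)) (hchain : IsNEChain p V r Wc)
    (j : ℕ) (hj1 : 1 ≤ j) (hjr : j ≤ r)
    (W : Submodule F (Ω → F)) (hWj : W ≤ Wc j) (hWj1 : ¬ W ≤ Wc (j - 1)) :
    (∀ W' : Submodule F (Ω → F), W ≤ W' → W' ≤ V →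
        ∃ U1 : Submodule F (Ω → F), U1 < W' ∧
          condNE p (Wc j) (Wc (j - 1)) ≤ condNE p W' U1) ∧
      (∀ U1 : Submodule F (Ω → F), U1 < Wc j →
        condNE p (Wc j) U1 ≤ condNE p (Wc j) (Wc (j - 1))) := by
  exact aux_stmt_10 p V r Wc hp hpsum hchain j hj1 hjr W hWj hWj1
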